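/- Let K be a convex body in ℝⁿ. Then vol(2K − K) ≤ 2ⁿ · C(2n, n) · vol(K), where 2K − K = {2a − b : a, b ∈ K}, C(2n, n) is the binomial coefficient, and vol denotes Lebesgue measure. -/

import Mathlib

open Pointwise MeasureTheory Set
open scoped ENNReal NNReal

section Aux

/-- real Beta integral value for natural exponents -/
lemma rs_beta_nat (a b : ℕ) :
    ∫ x in (0:ℝ)..1, x ^ a * (1 - x) ^ b =
      (a.factorial * b.factorial : ℝ) / ((a + b + 1).factorial) := by
  have ha : 0 < Complex.re (a + 1) := by
    simp [Complex.add_re, Complex.one_re, Complex.natCast_re]; positivity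
  have hb : 0 < Complex.re (b + 1) := by
    simp [Complex.add_re, Complex.one_re, Complex.natCast_re]; positivity
  have key := Complex.Gamma_mul_Gamma_eq_betaIntegral ha hb
  rw [Complex.betaIntegral] at key
  have : ∀ x : ℝ, x ∈ Set.uIcc (0:ℝ) 1 →
      (x:ℂ) ^ ((a:ℂ) + 1 - 1) * (1 - (x:ℂ)) ^ ((b:ℂ) + 1 - 1)
        = ((x ^ a * (1 - x) ^ b : ℝ) : ℂ) := by
    intro x _
    push_cast
    rw [add_sub_cancel_right, add_sub_cancel_right, Complex.cpow_natCast, Complex.cpow_natCast]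
  rw [intervalIntegral.integral_congr this, intervalIntegral.integral_ofReal] at key
  have hG : Complex.Gamma ((a:ℂ) + 1 + ((b:ℂ) + 1)) = ((a + b + 1).factorial : ℂ) := by
    have : (a:ℂ) + 1 + ((b:ℂ) + 1) = ((a + b + 1 : ℕ) : ℂ) + 1 := by push_cast; ring
    rw [this, Complex.Gamma_nat_eq_factorial]
  rw [Complex.Gamma_nat_eq_factorial, Complex.Gamma_nat_eq_factorial, hG] at key
  have hne : ((a + b + 1).factorial : ℂ) ≠ 0 :=
    Nat.cast_ne_zero.2 (Nat.factorial_ne_zero _)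
  have : ((∫ x in (0:ℝ)..1, x ^ a * (1 - x) ^ b : ℝ) : ℂ)
      = ((a.factorial * b.factorial : ℝ) / ((a + b + 1).factorial : ℝ) : ℂ) := by
    field_simp at key
    rw [eq_div_iff (by exact_mod_cast hne)]
    push_cast
    linear_combination -key
  exact_mod_cast this

/-- integral of the weight `n (1-t)^(n-1)` over `Ico a 1`. -/
lemma rs_weight_integral (n : ℕ) (hn : 0 < n) {a : ℝ} (ha : 0 ≤ a) (ha1 : a ≤ 1) :
    ∫⁻ t in Set.Ico a 1, ENNReal.ofReal ((n : ℝ) * (1 - t) ^ (n - 1)) =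
      ENNReal.ofReal ((1 - a) ^ n) := by
  rw [MeasureTheory.Measure.restrict_congr_set Ico_ae_eq_Ioc]
  have hint : IntegrableOn (fun t : ℝ => (n : ℝ) * (1 - t) ^ (n - 1)) (Set.Ioc a 1) := by
    apply Continuous.integrableOn_Ioc
    continuity
  have hnn : 0 ≤ᵐ[volume.restrict (Set.Ioc a 1)]
      fun t : ℝ => (n : ℝ) * (1 - t) ^ (n - 1) := by
    filter_upwards [ae_restrict_mem measurableSet_Ioc] with t ht
    have : 0 ≤ 1 - t := by linarith [ht.2]
    positivity
  rw [← MeasureTheory.ofReal_integral_eq_lintegral_ofReal hint hnn]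
  congr 1
  rw [← intervalIntegral.integral_of_le ha1]
  have : ∀ t ∈ Set.uIcc a 1, (n : ℝ) * (1 - t) ^ (n - 1)
      = (fun u => (n : ℝ) * u ^ (n - 1)) (1 - t) := fun t _ => rfl
  rw [intervalIntegral.integral_congr this, intervalIntegral.integral_comp_sub_left
    (fun u => (n : ℝ) * u ^ (n - 1)) 1]
  rw [intervalIntegral.integral_const_mul, integral_pow]
  have h1 : n - 1 + 1 = n := Nat.succ_pred_eq_of_pos hn
  rw [h1]
  rw [sub_self, zero_pow hn.ne']
  field_simp
  rw [show ((n - 1 : ℕ) : ℝ) + 1 = n by exact_mod_cast h1]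
  ring

end Aux

section Core

variable {n : ℕ}

local notation "E" => EuclideanSpace ℝ (Fin n)

/-- Fubini identity: `∫ vol(K ∩ (x+K)) dx = vol(K)²`. -/
lemma rs_fubini (K : Set E) (hKm : MeasurableSet K) :
    ∫⁻ x : E, volume {y : E | y ∈ K ∧ y - x ∈ K} = volume K * volume K := by
  set A : Set (E × E) := {p : E × E | p.2 ∈ K ∧ p.2 - p.1 ∈ K} with hA
  have hAm : MeasurableSet A := by
    apply MeasurableSet.inter
    · exact measurable_snd hKm
    · exact (measurable_snd.sub measurable_fst) hKm
  have h1 : ∀ x : E, {y : E | y ∈ K ∧ y - x ∈ K} = Prod.mk x ⁻¹' A := by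
    intro x; rfl
  simp_rw [h1]
  rw [← MeasureTheory.Measure.prod_apply hAm,
    MeasureTheory.Measure.prod_apply_symm hAm]
  have h2 : ∀ y : E, volume ((fun x : E => (x, y)) ⁻¹' A)
      = K.indicator (fun _ => volume K) y := by
    intro y
    by_cases hy : y ∈ K
    · have : ((fun x : E => (x, y)) ⁻¹' A) = (fun x : E => y - x) ⁻¹' K := by
        ext x; simp [hA, hy]
      rw [this, Set.indicator_of_mem hy]
      have : (fun x : E => y - x) = (fun x : E => y + x) ∘ (fun x : E => -x) := by
        funext x; simp [sub_eq_add_neg]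
      rw [this, Set.preimage_comp,
        show ((fun x : E => -x) ⁻¹' ((fun x : E => y + x) ⁻¹' K))
          = -((fun x : E => y + x) ⁻¹' K) from rfl,
        Measure.measure_neg, measure_preimage_add]
    · have : ((fun x : E => (x, y)) ⁻¹' A) = ∅ := by
        ext x; simp [hA, hy]
      rw [this, Set.indicator_of_notMem hy, measure_empty]
  simp_rw [h2]
  rw [MeasureTheory.lintegral_indicator hKm]
  simp [mul_comm]

/-- pointwise lower bound: if `x ∈ t • (K - K)` then `vol(K ∩ (x+K)) ≥ (1-t)ⁿ vol K`. -/
lemma rs_pointwise (K : Set E) (hKconv : Convex ℝ K) {t : ℝ} (ht : t ∈ Set.Icc (0:ℝ) 1)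
    {x : E} (hx : x ∈ t • (K - K)) :
    ENNReal.ofReal ((1 - t) ^ n) * volume K ≤ volume {y : E | y ∈ K ∧ y - x ∈ K} := by
  obtain ⟨d, hd, rfl⟩ := hx
  obtain ⟨a, ha, b, hb, rfl⟩ := hd
  have hsub : (t • a) +ᵥ ((1 - t) • K) ⊆ {y : E | y ∈ K ∧ y - t • (a - b) ∈ K} := by
    rintro y ⟨z, ⟨k, hk, rfl⟩, rfl⟩
    constructor
    · have := hKconv hk ha (by linarith [ht.2] : (0:ℝ) ≤ 1 - t) ht.1 (by ring)
      simpa [add_comm] using this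
    · have h2 := hKconv hk hb (by linarith [ht.2] : (0:ℝ) ≤ 1 - t) ht.1 (by ring)
      have heq : (t • a + (1 - t) • k) - t • (a - b) = (1 - t) • k + t • b := by
        rw [smul_sub]; abel
      show (t • a + (1 - t) • k) - t • (a - b) ∈ K
      rw [heq]
      exact h2
  calc ENNReal.ofReal ((1 - t) ^ n) * volume K
      = volume ((t • a) +ᵥ ((1 - t) • K)) := by
        rw [measure_vadd, Measure.addHaar_smul, finrank_euclideanSpace_fin]
        congr 2
        rw [abs_of_nonneg (pow_nonneg (by linarith [ht.2]) n)]
    _ ≤ _ := measure_mono hsub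

end Core

section Core2

variable {n : ℕ}

local notation "E" => EuclideanSpace ℝ (Fin n)

lemma rogers_shephard (hn : 0 < n) (K : Set E) (hKc : IsCompact K)
    (hKconv : Convex ℝ K) (hK0 : K.Nonempty) (hV0 : volume K ≠ 0) :
    volume (K - K) ≤ (((2 * n).choose n : ℕ) : ℝ≥0∞) * volume K := by
  classical
  set D : Set E := K - K with hD
  have hDc : IsCompact D := by
    have him : D = (fun p : E × E => p.1 - p.2) '' (K ×ˢ K) := by
      ext z
      simp [hD, Set.mem_sub, Set.mem_image, Set.mem_prod, and_assoc]
    rw [him]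
    exact (hKc.prod hKc).image (continuous_fst.sub continuous_snd)
  have hDconv : Convex ℝ D := hKconv.sub hKconv
  have hDm : MeasurableSet D := hDc.isClosed.measurableSet
  have hKm : MeasurableSet K := hKc.isClosed.measurableSet
  have h0D : (0 : E) ∈ D := by
    obtain ⟨a, ha⟩ := hK0
    have h := Set.sub_mem_sub ha ha
    rwa [sub_self] at h
  set V := volume K with hV
  have hVtop : V ≠ ⊤ := hKc.measure_lt_top.ne
  set W : ℝ → ℝ≥0∞ := fun t => ENNReal.ofReal ((n : ℝ) * (1 - t) ^ (n - 1)) with hWdef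
  have hWm : Measurable W := by
    apply Measurable.ennreal_ofReal
    exact (continuous_const.mul ((continuous_const.sub continuous_id).pow _)).measurable
  set f : E → ℝ≥0∞ := fun x => volume {y : E | y ∈ K ∧ y - x ∈ K} with hfdef
  set P : ℝ × E → ℝ≥0∞ :=
    fun p => W p.1 * D.indicator (fun _ => (1 : ℝ≥0∞)) (p.1⁻¹ • p.2) with hPdef
  have hPm : Measurable P := by
    apply Measurable.mul
    · exact hWm.comp measurable_fst
    · exact (measurable_const.indicator hDm).comp ((measurable_fst.inv).smul measurable_snd)
  -- slices in `t`
  have slice : ∀ t ∈ Set.Ioo (0:ℝ) 1, ∫⁻ x : E, P (t, x) = W t * volume (t • D) := by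
    intro t ht
    have htne : t ≠ 0 := ne_of_gt ht.1
    have hset : {x : E | t⁻¹ • x ∈ D} = t • D := by
      ext x
      simp [mem_smul_set_iff_inv_smul_mem₀ htne, Set.mem_setOf_eq]
    have hind : (fun x : E => D.indicator (fun _ => (1 : ℝ≥0∞)) (t⁻¹ • x))
        = (t • D).indicator (fun _ => (1 : ℝ≥0∞)) := by
      funext x
      by_cases hx : t⁻¹ • x ∈ D
      · rw [Set.indicator_of_mem hx,
          Set.indicator_of_mem ((mem_smul_set_iff_inv_smul_mem₀ htne D x).2 hx)]
      · rw [Set.indicator_of_notMem hx,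
          Set.indicator_of_notMem (fun h => hx ((mem_smul_set_iff_inv_smul_mem₀ htne D x).1 h))]
    have hsm : MeasurableSet (t • D) := by
      rw [← hset]
      exact (measurable_const_smul t⁻¹) hDm
    simp only [hPdef]
    rw [lintegral_const_mul _ (by rw [hind]; exact measurable_const.indicator hsm)]
    congr 1
    rw [hind, lintegral_indicator hsm]
    simp
  -- value of the weighted integral
  have C1 : ∫⁻ t in Set.Ioo (0:ℝ) 1, W t * volume (t • D)
      = volume D * ENNReal.ofReal ((n.factorial * n.factorial : ℝ) / ((2 * n).factorial)) := by
    have heq : ∀ t ∈ Set.Ioo (0:ℝ) 1, W t * volume (t • D)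
        = ENNReal.ofReal ((n : ℝ) * (1 - t) ^ (n - 1) * t ^ n) * volume D := by
      intro t ht
      rw [Measure.addHaar_smul, finrank_euclideanSpace_fin,
        abs_of_nonneg (pow_nonneg ht.1.le n), hWdef, ← mul_assoc,
        ← ENNReal.ofReal_mul (by
          have h1 : (0:ℝ) ≤ 1 - t := by linarith [ht.2]
          positivity)]
    rw [setLIntegral_congr_fun measurableSet_Ioo heq,
      lintegral_mul_const _ (by
        apply Measurable.ennreal_ofReal
        exact ((continuous_const.mul ((continuous_const.sub continuous_id).pow
          _)).mul (continuous_pow _ |>.comp continuous_id)).measurable)]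
    rw [mul_comm]
    congr 1
    rw [MeasureTheory.Measure.restrict_congr_set Ioo_ae_eq_Ioc]
    have hint : IntegrableOn (fun t : ℝ => (n : ℝ) * (1 - t) ^ (n - 1) * t ^ n)
        (Set.Ioc (0:ℝ) 1) := by
      apply Continuous.integrableOn_Ioc
      exact (continuous_const.mul ((continuous_const.sub continuous_id).pow _)).mul
        (continuous_pow _)
    have hnn : 0 ≤ᵐ[volume.restrict (Set.Ioc (0:ℝ) 1)]
        fun t : ℝ => (n : ℝ) * (1 - t) ^ (n - 1) * t ^ n := by
      filter_upwards [ae_restrict_mem measurableSet_Ioc] with t ht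
      have h1 : 0 ≤ 1 - t := by linarith [ht.2]
      have h2 : 0 ≤ t := ht.1.le
      positivity
    rw [← MeasureTheory.ofReal_integral_eq_lintegral_ofReal hint hnn]
    congr 1
    rw [← intervalIntegral.integral_of_le (by norm_num : (0:ℝ) ≤ 1)]
    have hre : ∀ t ∈ Set.uIcc (0:ℝ) 1, (n : ℝ) * (1 - t) ^ (n - 1) * t ^ n
        = (n : ℝ) * (t ^ n * (1 - t) ^ (n - 1)) := by
      intro t _; ring
    rw [intervalIntegral.integral_congr hre, intervalIntegral.integral_const_mul,
      rs_beta_nat n (n - 1)]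
    have h2n : n + (n - 1) + 1 = 2 * n := by omega
    rw [h2n]
    have hfac : (n : ℝ) * (n - 1).factorial = n.factorial := by
      rw_mod_cast [Nat.mul_factorial_pred hn.ne']
    field_simp
    rw [← hfac]
  -- Fubini swap
  have swap : ∫⁻ t in Set.Ioo (0:ℝ) 1, W t * volume (t • D)
      = ∫⁻ x : E, ∫⁻ t in Set.Ioo (0:ℝ) 1, P (t, x) := by
    rw [setLIntegral_congr_fun measurableSet_Ioo
      (fun t ht => (slice t ht).symm)]
    exact lintegral_lintegral_swap hPm.aemeasurable
  -- pointwise bound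
  have L5 : ∀ x : E, V * ∫⁻ t in Set.Ioo (0:ℝ) 1, P (t, x) ≤ f x := by
    intro x
    set S : Set ℝ := {t | t ∈ Set.Ioo (0:ℝ) 1 ∧ x ∈ t • D} with hSdef
    rcases Set.eq_empty_or_nonempty S with hS | hS
    · have hzero : ∫⁻ t in Set.Ioo (0:ℝ) 1, P (t, x) = 0 := by
        rw [setLIntegral_congr_fun measurableSet_Ioo
          (fun t ht => ?_), lintegral_zero]
        have hxt : x ∉ t • D := fun hmem =>
          (Set.eq_empty_iff_forall_notMem.1 hS t) ⟨ht, hmem⟩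
        have : t⁻¹ • x ∉ D := fun h =>
          hxt ((mem_smul_set_iff_inv_smul_mem₀ (ne_of_gt ht.1) D x).2 h)
        simp [hPdef, Set.indicator_of_notMem this]
      rw [hzero, mul_zero]
      exact zero_le
    · have hbdd : BddBelow S := ⟨0, fun t ht => ht.1.1.le⟩
      set t₀ : ℝ := sInf S with ht₀def
      have ht₀0 : 0 ≤ t₀ := le_csInf hS fun t ht => ht.1.1.le
      obtain ⟨t₁, ht₁⟩ := hS
      have ht₀1 : t₀ < 1 := lt_of_le_of_lt (csInf_le hbdd ht₁) ht₁.1.2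
      obtain ⟨u, -, hu_tend, hu_mem⟩ := exists_seq_tendsto_sInf ⟨t₁, ht₁⟩ hbdd
      have hxD : x ∈ t₀ • D := by
        rcases eq_or_lt_of_le ht₀0 with h0 | h0
        · -- t₀ = 0, show x = 0
          obtain ⟨R, hR⟩ := hDc.isBounded.subset_closedBall 0
          have hxnorm : ∀ i, ‖x‖ ≤ u i * R := by
            intro i
            obtain ⟨d, hd, rfl⟩ := (hu_mem i).2
            have hdR : ‖d‖ ≤ R := by
              simpa [Metric.mem_closedBall, dist_zero_right] using hR hd
            have hu_pos : 0 < u i := (hu_mem i).1.1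
            calc ‖u i • d‖ = u i * ‖d‖ := by
                  rw [norm_smul, Real.norm_eq_abs, abs_of_pos hu_pos]
              _ ≤ u i * R := by nlinarith
          have hlim : Filter.Tendsto (fun i => u i * R) Filter.atTop (nhds (t₀ * R)) :=
            hu_tend.mul_const R
          have hx0 : ‖x‖ ≤ t₀ * R := ge_of_tendsto hlim
            (Filter.Eventually.of_forall hxnorm)
          have : ‖x‖ ≤ 0 := by rw [← h0] at hx0; simpa using hx0
          have hx : x = 0 := norm_le_zero_iff.1 this
          rw [← h0, zero_smul_set ⟨0, h0D⟩, hx]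
          exact Set.mem_singleton 0
        · have hd_mem : ∀ i, (u i)⁻¹ • x ∈ D := fun i =>
            (mem_smul_set_iff_inv_smul_mem₀ (ne_of_gt (hu_mem i).1.1) D x).1 (hu_mem i).2
          have hd_tend : Filter.Tendsto (fun i => (u i)⁻¹ • x) Filter.atTop
              (nhds (t₀⁻¹ • x)) := (hu_tend.inv₀ h0.ne').smul_const x
          have hmem := hDc.isClosed.mem_of_tendsto hd_tend
            (Filter.Eventually.of_forall hd_mem)
          exact (mem_smul_set_iff_inv_smul_mem₀ h0.ne' D x).2 hmem
      have key1 := rs_pointwise K hKconv ⟨ht₀0, ht₀1.le⟩ hxD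
      have key2 : ∫⁻ t in Set.Ioo (0:ℝ) 1, P (t, x) ≤ ENNReal.ofReal ((1 - t₀) ^ n) := by
        have hbound : ∀ t ∈ Set.Ioo (0:ℝ) 1, P (t, x) ≤ (Set.Ico t₀ 1).indicator W t := by
          intro t ht
          by_cases hxt : x ∈ t • D
          · have h1 : t₀ ≤ t := csInf_le hbdd ⟨ht, hxt⟩
            have hmem : t ∈ Set.Ico t₀ 1 := ⟨h1, ht.2⟩
            rw [Set.indicator_of_mem hmem W]
            have : t⁻¹ • x ∈ D := (mem_smul_set_iff_inv_smul_mem₀ (ne_of_gt ht.1) D x).1 hxt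
            simp [hPdef, Set.indicator_of_mem this]
          · have : t⁻¹ • x ∉ D := fun h =>
              hxt ((mem_smul_set_iff_inv_smul_mem₀ (ne_of_gt ht.1) D x).2 h)
            simp [hPdef, Set.indicator_of_notMem this]
        calc ∫⁻ t in Set.Ioo (0:ℝ) 1, P (t, x)
            ≤ ∫⁻ t in Set.Ioo (0:ℝ) 1, (Set.Ico t₀ 1).indicator W t := by
              apply lintegral_mono_ae
              filter_upwards [ae_restrict_mem measurableSet_Ioo] with t ht
              exact hbound t ht
          _ ≤ ∫⁻ t, (Set.Ico t₀ 1).indicator W t :=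
              lintegral_mono' Measure.restrict_le_self (le_refl _)
          _ = ∫⁻ t in Set.Ico t₀ 1, W t := lintegral_indicator measurableSet_Ico W
          _ = ENNReal.ofReal ((1 - t₀) ^ n) := rs_weight_integral n hn ht₀0 ht₀1.le
      calc V * ∫⁻ t in Set.Ioo (0:ℝ) 1, P (t, x)
          ≤ V * ENNReal.ofReal ((1 - t₀) ^ n) := mul_le_mul_right key2 V
        _ = ENNReal.ofReal ((1 - t₀) ^ n) * V := mul_comm _ _
        _ ≤ f x := key1
  -- combine everything
  have inner_meas : Measurable fun x : E => ∫⁻ t in Set.Ioo (0:ℝ) 1, P (t, x) :=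
    hPm.lintegral_prod_left'
  set c : ℝ := (n.factorial * n.factorial : ℝ) / ((2 * n).factorial) with hc
  have main : V * (volume D * ENNReal.ofReal c) ≤ V * V := by
    rw [← C1, swap, ← lintegral_const_mul _ inner_meas, ← rs_fubini K hKm]
    exact lintegral_mono L5
  have hcancel : volume D * ENNReal.ofReal c ≤ V :=
    (ENNReal.mul_le_mul_iff_right hV0 hVtop).1 main
  have hCc : ENNReal.ofReal c * (((2 * n).choose n : ℕ) : ℝ≥0∞) = 1 := by
    rw [show (((2 * n).choose n : ℕ) : ℝ≥0∞) = ENNReal.ofReal ((2 * n).choose n : ℝ) by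
      rw [ENNReal.ofReal_natCast]]
    rw [← ENNReal.ofReal_mul (by positivity)]
    rw [show c * ((2 * n).choose n : ℝ) = 1 from ?_, ENNReal.ofReal_one]
    have hkey : (2 * n).choose n * n.factorial * n.factorial = (2 * n).factorial := by
      have := Nat.choose_mul_factorial_mul_factorial (show n ≤ 2 * n by omega)
      rwa [show 2 * n - n = n by omega] at this
    have hfacne : ((2 * n).factorial : ℝ) ≠ 0 := Nat.cast_ne_zero.2 (Nat.factorial_ne_zero _)
    rw [hc]
    field_simp
    rw_mod_cast [← hkey]
    push_cast
    ring
  calc volume D = volume D * (ENNReal.ofReal c * (((2 * n).choose n : ℕ) : ℝ≥0∞)) := by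
        rw [hCc, mul_one]
    _ = (volume D * ENNReal.ofReal c) * (((2 * n).choose n : ℕ) : ℝ≥0∞) := by ring
    _ ≤ V * (((2 * n).choose n : ℕ) : ℝ≥0∞) := mul_le_mul_left hcancel _
    _ = (((2 * n).choose n : ℕ) : ℝ≥0∞) * V := mul_comm _ _

end Core2

/-- For a convex body `K ⊆ ℝⁿ`, `vol(2K - K) ≤ 2ⁿ · C(2n, n) · vol(K)`.
This follows from the Rogers–Shephard inequality. -/
theorem volume_two_smul_sub_le
    (n : ℕ) (K : Set (EuclideanSpace ℝ (Fin n)))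
    (hKc : IsCompact K) (hKconv : Convex ℝ K) (hKint : (interior K).Nonempty) :
    volume ((2 : ℝ) • K - K) ≤ (2 ^ n * ((2 * n).choose n) : ℕ) * volume K := by
  classical
  obtain ⟨x₀, hx₀i⟩ := hKint
  have hx₀ : x₀ ∈ K := interior_subset hx₀i
  rcases Nat.eq_zero_or_pos n with hn0 | hn
  · -- trivial case `n = 0`
    subst hn0
    have hsub : Subsingleton (EuclideanSpace ℝ (Fin 0)) :=
      ⟨fun a b => by ext i; exact Fin.elim0 i⟩
    have hKsub : (2 : ℝ) • K - K ⊆ K := by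
      intro y _
      have : y = x₀ := hsub.elim y x₀
      rw [this]; exact hx₀
    refine le_trans (measure_mono hKsub) ?_
    norm_num
  · have hV0 : volume K ≠ 0 := by
      have : 0 < volume (interior K) :=
        (isOpen_interior.measure_pos volume ⟨x₀, hx₀i⟩)
      exact (lt_of_lt_of_le this (measure_mono interior_subset)).ne'
    have hRS := rogers_shephard hn K hKc hKconv ⟨x₀, hx₀⟩ hV0
    set D : Set (EuclideanSpace ℝ (Fin n)) := K - K with hD
    have hDconv : Convex ℝ D := hKconv.sub hKconv
    have hsub : (2 : ℝ) • K - K ⊆ x₀ +ᵥ ((2 : ℝ) • D) := by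
      rintro y ⟨u, ⟨a, ha, rfl⟩, b, hb, rfl⟩
      set d : EuclideanSpace ℝ (Fin n) :=
        (1/2 : ℝ) • (a - b) + (1/2 : ℝ) • (a - x₀) with hd
      have hdD : d ∈ D := by
        have h1 : a - b ∈ D := Set.sub_mem_sub ha hb
        have h2 : a - x₀ ∈ D := Set.sub_mem_sub ha hx₀
        exact hDconv h1 h2 (by norm_num) (by norm_num) (by norm_num)
      refine ⟨(2 : ℝ) • d, ⟨d, hdD, rfl⟩, ?_⟩
      show x₀ + (2 : ℝ) • d = (2 : ℝ) • a - b
      rw [hd]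
      module
    calc volume ((2 : ℝ) • K - K) ≤ volume (x₀ +ᵥ ((2 : ℝ) • D)) := measure_mono hsub
      _ = volume ((2 : ℝ) • D) := measure_vadd volume x₀ ((2 : ℝ) • D)
      _ = ENNReal.ofReal (|(2:ℝ) ^ n|) * volume D := by
          rw [Measure.addHaar_smul, finrank_euclideanSpace_fin]
      _ = ((2 ^ n : ℕ) : ℝ≥0∞) * volume D := by
          rw [abs_of_nonneg (by positivity : (0:ℝ) ≤ (2:ℝ) ^ n)]
          rw [show ((2:ℝ) ^ n) = ((2 ^ n : ℕ) : ℝ) by push_cast; ring, ENNReal.ofReal_natCast]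
      _ ≤ ((2 ^ n : ℕ) : ℝ≥0∞) * ((((2 * n).choose n : ℕ) : ℝ≥0∞) * volume K) :=
          mul_le_mul_right hRS _
      _ = (2 ^ n * ((2 * n).choose n) : ℕ) * volume K := by
          rw [← mul_assoc]
          congr 1
          push_cast
          ring
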